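/- Let z₁, z₂ be nonzero complex numbers with (z₁, z₂) ≠ (1, 1), and let ℂ(z₁, z₂) denote the one-dimensional complex representation of the group ℤ × ℤ (written multiplicatively) in which the element (m, n) acts by multiplication by z₁^m · z₂^n. Then the group cohomology H^n(ℤ × ℤ; ℂ(z₁, z₂)) vanishes for every n ≥ 0. -/

import Mathlib

namespace GC2Aux
open Fin

variable {α : Sort*}

lemma val_succAbove {n : ℕ} (p : Fin (n+1)) (i : Fin n) :
    ((p.succAbove i : Fin (n+1)) : ℕ) =
      if (i : ℕ) < (p : ℕ) then (i : ℕ) else (i : ℕ) + 1 := by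
  rcases lt_or_ge (castSucc i) p with h | h
  · rw [Fin.succAbove_of_castSucc_lt _ _ h]
    have : (i : ℕ) < (p : ℕ) := h
    simp [this]
  · rw [Fin.succAbove_of_le_castSucc _ _ h]
    have : ¬ ((i : ℕ) < (p : ℕ)) := not_lt.2 h
    simp [this]

lemma insertNth_apply_val {n : ℕ} {α : Type*} (i : Fin (n+1)) (x : α) (p : Fin n → α)
    (k : Fin (n+1)) :
    Fin.insertNth (α := fun _ => α) i x p k =
      if h1 : (k : ℕ) < (i : ℕ) then p ⟨(k : ℕ), by have := i.is_lt; omega⟩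
      else if h2 : (k : ℕ) = (i : ℕ) then x
      else p ⟨(k : ℕ) - 1, by have := k.is_lt; omega⟩ := by
  rcases eq_or_ne k i with rfl | hk
  · simp
  · obtain ⟨j, rfl⟩ := Fin.exists_succAbove_eq hk
    rw [Fin.insertNth_apply_succAbove]
    have hv := val_succAbove i j
    split at hv
    · rw [dif_pos (by omega)]
      congr 1; exact Fin.ext (by first | (simp only [Fin.val_mk]; omega) | omega)
    · rw [dif_neg (by omega), dif_neg (by omega)]
      congr 1; exact Fin.ext (by first | (simp only [Fin.val_mk]; omega) | omega)

lemma contractNth_apply_val {n : ℕ} {α : Type*} (j : Fin (n+1)) (op : α → α → α)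
    (g : Fin (n+1) → α) (k : Fin n) :
    j.contractNth op g k =
      if (k : ℕ) < (j : ℕ) then g ⟨(k : ℕ), by have := k.is_lt; omega⟩
      else if (k : ℕ) = (j : ℕ) then
        op (g ⟨(k : ℕ), by have := k.is_lt; omega⟩) (g ⟨(k : ℕ) + 1, by have := k.is_lt; omega⟩)
      else g ⟨(k : ℕ) + 1, by have := k.is_lt; omega⟩ := by
  rcases lt_trichotomy ((k : ℕ)) ((j : ℕ)) with h | h | h
  · rw [Fin.contractNth_apply_of_lt _ _ _ _ h, if_pos h]; congr 1
  · rw [Fin.contractNth_apply_of_eq _ _ _ _ h, if_neg (by omega), if_pos h]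
    congr 1
  · rw [Fin.contractNth_apply_of_gt _ _ _ _ h, if_neg (by omega), if_neg (by omega)]
    congr 1


set_option maxHeartbeats 1600000
section
variable {β : Type*} (t : β) (op : β → β → β)

lemma TLlast (m : ℕ) (g : Fin (m+1) → β) :
    (Fin.last (m+1)).contractNth op (Fin.insertNth (α := fun _ => β) (Fin.last (m+1)) t g) = g := by
  funext k
  simp only [contractNth_apply_val, insertNth_apply_val, Fin.val_mk, Fin.val_last]
  have := k.is_lt
  split_ifs <;>
    first
      | omega
      | rfl
      | (congr 1 <;> first | rfl | (refine congrArg _ (Fin.ext ?_); first | (simp only [Fin.val_mk]; omega) | omega) | (refine Fin.ext ?_; first | (simp only [Fin.val_mk]; omega) | omega))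

lemma TLdiag (m : ℕ) (a : Fin (m+1)) (g : Fin (m+1) → β) :
    (a.castSucc).contractNth op (Fin.insertNth (α := fun _ => β) a.castSucc t g) =
      Function.update g a (op t (g a)) := by
  funext k
  simp only [contractNth_apply_val, insertNth_apply_val, Fin.val_mk, Fin.coe_castSucc,
    Function.update_apply]
  have := k.is_lt; have := a.is_lt
  rcases eq_or_ne k a with rfl | hka
  · simp only [if_pos rfl]
    split_ifs <;>
      first
        | omega
        | rfl
        | (refine congrArg _ (Fin.ext ?_); first | (simp only [Fin.val_mk]; omega) | omega)
        | (congr 1 <;> first | rfl | (refine congrArg _ (Fin.ext ?_); first | (simp only [Fin.val_mk]; omega) | omega) | (refine Fin.ext ?_; first | (simp only [Fin.val_mk]; omega) | omega))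
  · rw [if_neg hka]
    have hka' : (k : ℕ) ≠ (a : ℕ) := fun h => hka (Fin.ext h)
    split_ifs <;>
      first
        | omega
        | rfl
        | (refine congrArg _ (Fin.ext ?_); first | (simp only [Fin.val_mk]; omega) | omega)
        | (congr 1 <;> first | rfl | (refine congrArg _ (Fin.ext ?_); first | (simp only [Fin.val_mk]; omega) | omega) | (refine Fin.ext ?_; first | (simp only [Fin.val_mk]; omega) | omega))

lemma TLF3 (m : ℕ) (a : Fin (m+1)) (g : Fin (m+1) → β) :
    (a.castSucc).contractNth op (Fin.insertNth (α := fun _ => β) a.succ t g) =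
      Function.update g a (op (g a) t) := by
  funext k
  simp only [contractNth_apply_val, insertNth_apply_val, Fin.val_mk, Fin.coe_castSucc,
    Fin.val_succ, Function.update_apply]
  have := k.is_lt; have := a.is_lt
  rcases eq_or_ne k a with rfl | hka
  · simp only [if_pos rfl]
    split_ifs <;>
      first
        | omega
        | rfl
        | (refine congrArg _ (Fin.ext ?_); first | (simp only [Fin.val_mk]; omega) | omega)
        | (congr 1 <;> first | rfl | (refine congrArg _ (Fin.ext ?_); first | (simp only [Fin.val_mk]; omega) | omega) | (refine Fin.ext ?_; first | (simp only [Fin.val_mk]; omega) | omega))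
  · rw [if_neg hka]
    have hka' : (k : ℕ) ≠ (a : ℕ) := fun h => hka (Fin.ext h)
    split_ifs <;>
      first
        | omega
        | rfl
        | (refine congrArg _ (Fin.ext ?_); first | (simp only [Fin.val_mk]; omega) | omega)
        | (congr 1 <;> first | rfl | (refine congrArg _ (Fin.ext ?_); first | (simp only [Fin.val_mk]; omega) | omega) | (refine Fin.ext ?_; first | (simp only [Fin.val_mk]; omega) | omega))

lemma TLoff (m : ℕ) (a b : Fin (m+1)) (g : Fin (m+1) → β) (i j : Fin (m+2))
    (h : ((a:ℕ) ≤ (b:ℕ) ∧ (i:ℕ) = (a:ℕ) ∧ (j:ℕ) = (b:ℕ)+1) ∨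
         ((b:ℕ) < (a:ℕ) ∧ (i:ℕ) = (a:ℕ)+1 ∧ (j:ℕ) = (b:ℕ))) :
    j.contractNth op (Fin.insertNth (α := fun _ => β) i t g) =
      Fin.insertNth (α := fun _ => β) a t (b.contractNth op g) := by
  funext k
  simp only [contractNth_apply_val, insertNth_apply_val, Fin.val_mk]
  have := k.is_lt; have := a.is_lt; have := b.is_lt; have := i.is_lt; have := j.is_lt
  rcases h with ⟨h1, h2, h3⟩ | ⟨h1, h2, h3⟩ <;>
    split_ifs <;>
      first
        | omega
        | rfl
        | (refine congrArg _ (Fin.ext ?_); first | (simp only [Fin.val_mk]; omega) | omega)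
        | (congr 1 <;> first | rfl | (refine congrArg _ (Fin.ext ?_); first | (simp only [Fin.val_mk]; omega) | omega) | (refine Fin.ext ?_; first | (simp only [Fin.val_mk]; omega) | omega))


open groupCohomology CategoryTheory CategoryTheory.Limits

variable {k G : Type u} [CommRing k] [Group G]

/-- The prism homotopy on inhomogeneous cochains attached to a central element `t`. -/
noncomputable def HH (A : Rep k G) (t : G) (m : ℕ) (f : (Fin (m+1) → G) → A) :
    (Fin m → G) → A :=
  fun x => ∑ i : Fin (m+1), ((-1 : k)^(i : ℕ)) • f (Fin.insertNth (α := fun _ => G) i t x)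

lemma smul_neg_one_pow_succ {A' : Type*} [AddCommGroup A'] [Module k A'] (x : ℕ) (a : A') :
    ((-1 : k)^(x+1)) • a = -(((-1 : k)^x) • a) := by
  rw [pow_succ, mul_neg_one, neg_smul]

lemma key0 (A : Rep k G) (t : G) (c : k) (hρ : ∀ x : A, A.ρ t x = c • x)
    (f : (Fin 0 → G) → A) :
    (inhomogeneousCochains.d A 0).hom f (fun _ : Fin 1 => t)
      = (c - 1) • f (fun x => x.elim0) := by
  rw [inhomogeneousCochains.d_hom_apply, Fin.sum_univ_one]
  have e0 : ∀ (u v : Fin 0 → G), u = v := fun u v => funext fun x => x.elim0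
  rw [hρ, e0 (fun i => (fun _ : Fin 1 => t) i.succ) (fun x => x.elim0),
    e0 ((0 : Fin 1).contractNth (fun x1 x2 => x1 * x2) (fun _ : Fin 1 => t))
      (fun x => x.elim0)]
  have h01 : ((0 : Fin 1) : ℕ) + 1 = 0 + 1 := rfl
  rw [h01, smul_neg_one_pow_succ, pow_zero, one_smul, sub_smul, one_smul]
  abel

lemma hS1 (A : Rep k G) (t : G) (c : k) (hρ : ∀ x : A, A.ρ t x = c • x)
    (m : ℕ) (f : (Fin (m+1) → G) → A) (g : Fin (m+1) → G) :
    (∑ i : Fin (m+2), ((-1:k)^(i:ℕ)) •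
        A.ρ (Fin.insertNth (α := fun _ => G) i t g 0)
          (f (fun l => Fin.insertNth (α := fun _ => G) i t g l.succ)))
      + A.ρ (g 0) (HH A t m f (fun l => g l.succ)) = c • f g := by
  have h0a : Fin.insertNth (α := fun _ => G) (0 : Fin (m+2)) t g 0 = t :=
    Fin.insertNth_apply_same _ _ _
  have h0b : (fun l : Fin (m+1) => Fin.insertNth (α := fun _ => G) (0 : Fin (m+2)) t g l.succ)
      = g := by
    funext l
    rw [insertNth_apply_val, dif_neg (by simp), dif_neg (by simp [Fin.val_succ])]
    exact congrArg g (Fin.ext (by simp [Fin.val_succ]))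
  have hs0 : ∀ i : Fin (m+1), Fin.insertNth (α := fun _ => G) i.succ t g 0 = g 0 := fun i => by
    rw [insertNth_apply_val, dif_pos (by simp [Fin.val_succ])]
    exact congrArg g (Fin.ext (by simp))
  have hst : ∀ i : Fin (m+1),
      (fun l : Fin (m+1) => Fin.insertNth (α := fun _ => G) i.succ t g l.succ)
        = Fin.insertNth (α := fun _ => G) i t (fun r : Fin m => g r.succ) := fun i => by
    funext l
    simp only [insertNth_apply_val, Fin.val_succ]
    split_ifs <;>
      first
        | omega
        | rfl
        | (refine congrArg _ (Fin.ext ?_);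
            first | (simp only [Fin.val_mk, Fin.val_succ]; omega) | omega)
  rw [Fin.sum_univ_succ]
  rw [h0a, h0b]
  simp only [hs0, hst]
  rw [Fin.val_zero, pow_zero, one_smul, hρ]
  simp only [Fin.val_succ, smul_neg_one_pow_succ]
  rw [HH, map_sum]
  simp only [map_smul]
  rw [Finset.sum_neg_distrib]
  abel

lemma hoff (A : Rep k G) (t : G) (m : ℕ) (f : (Fin (m+1) → G) → A) (g : Fin (m+1) → G)
    (b : Fin (m+1)) :
    (∑ i : Fin (m+2), ((-1:k)^((i:ℕ)+((i.succAbove b : Fin (m+2)):ℕ)+1)) •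
        f ((i.succAbove b).contractNth (fun x1 x2 => x1*x2)
            (Fin.insertNth (α := fun _ => G) i t g)))
      = f (Function.update g b (g b * t))
        + ∑ a : Fin (m+1), ((-1:k)^((a:ℕ)+(b:ℕ))) •
            f (Fin.insertNth (α := fun _ => G) a t
                (b.contractNth (fun x1 x2 => x1*x2) g)) := by
  rw [Fin.sum_univ_succAbove _ b.succ]
  have hpv : b.succ.succAbove b = b.castSucc :=
    Fin.succAbove_of_castSucc_lt _ _ (Fin.castSucc_lt_succ (i := b))
  congr 1
  · rw [hpv, TLF3]
    simp only [Fin.val_succ, Fin.coe_castSucc]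
    have h4 : ((b:ℕ)+1) + (b:ℕ) + 1 = 2*((b:ℕ)+1) := by omega
    rw [h4, pow_mul]
    norm_num
  · refine Finset.sum_congr rfl fun a _ => ?_
    rcases le_or_gt (a:ℕ) (b:ℕ) with hab | hab
    · have h2 : b.succ.succAbove a = a.castSucc :=
        Fin.succAbove_of_castSucc_lt _ _ (by rw [Fin.lt_def]; simp only [Fin.coe_castSucc, Fin.val_succ]; omega)
      rw [h2]
      have h3 : (a.castSucc).succAbove b = b.succ :=
        Fin.succAbove_of_le_castSucc _ _ (by rw [Fin.le_def]; simp only [Fin.coe_castSucc, Fin.val_succ]; omega)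
      rw [h3]
      rw [TLoff t (fun x1 x2 => x1*x2) m a b g a.castSucc b.succ
        (Or.inl ⟨hab, by simp, by simp [Fin.val_succ]⟩)]
      congr 1
      simp only [Fin.coe_castSucc, Fin.val_succ]
      have h5 : (a:ℕ) + ((b:ℕ)+1) + 1 = ((a:ℕ)+(b:ℕ)) + 2 := by omega
      rw [h5, pow_add]
      norm_num
    · have h2 : b.succ.succAbove a = a.succ :=
        Fin.succAbove_of_le_castSucc _ _ (by rw [Fin.le_def]; simp only [Fin.coe_castSucc, Fin.val_succ]; omega)
      rw [h2]
      have h3 : (a.succ).succAbove b = b.castSucc :=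
        Fin.succAbove_of_castSucc_lt _ _ (by rw [Fin.lt_def]; simp only [Fin.coe_castSucc, Fin.val_succ]; omega)
      rw [h3]
      rw [TLoff t (fun x1 x2 => x1*x2) m a b g a.succ b.castSucc
        (Or.inr ⟨hab, by simp [Fin.val_succ], by simp⟩)]
      congr 1
      simp only [Fin.coe_castSucc, Fin.val_succ]
      have h5 : ((a:ℕ)+1) + (b:ℕ) + 1 = ((a:ℕ)+(b:ℕ)) + 2 := by omega
      rw [h5, pow_add]
      norm_num

lemma hdiag (A : Rep k G) (t : G) (m : ℕ) (f : (Fin (m+1) → G) → A) (g : Fin (m+1) → G) :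
    (∑ i : Fin (m+2), ((-1:k)^((i:ℕ)+(i:ℕ)+1)) •
        f (i.contractNth (fun x1 x2 => x1*x2) (Fin.insertNth (α := fun _ => G) i t g)))
      = (∑ a : Fin (m+1), -(f (Function.update g a (t * g a)))) + -(f g) := by
  rw [Fin.sum_univ_castSucc
    (f := fun i : Fin (m+2) => ((-1:k)^((i:ℕ)+(i:ℕ)+1)) •
      f (i.contractNth (fun x1 x2 => x1*x2) (Fin.insertNth (α := fun _ => G) i t g)))]
  congr 1
  · refine Finset.sum_congr rfl fun a _ => ?_
    rw [TLdiag t (fun x1 x2 => x1*x2) m a g]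
    simp only [Fin.coe_castSucc]
    have h4 : (a:ℕ) + (a:ℕ) + 1 = 2*(a:ℕ)+1 := by omega
    rw [h4, pow_succ, pow_mul]
    norm_num
  · rw [TLlast t (fun x1 x2 => x1*x2) m g]
    simp only [Fin.val_last]
    have h4 : (m+1)+(m+1)+1 = 2*(m+1)+1 := by omega
    rw [h4, pow_succ, pow_mul]
    norm_num

lemma hS2 (A : Rep k G) (t : G) (htc : ∀ x : G, t * x = x * t)
    (m : ℕ) (f : (Fin (m+1) → G) → A) (g : Fin (m+1) → G) :
    (∑ i : Fin (m+2), ∑ j : Fin (m+2), ((-1:k)^((i:ℕ)+(j:ℕ)+1)) •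
        f (j.contractNth (fun x1 x2 => x1*x2) (Fin.insertNth (α := fun _ => G) i t g)))
      + ∑ j : Fin (m+1), ((-1:k)^((j:ℕ)+1)) •
          HH A t m f (j.contractNth (fun x1 x2 => x1*x2) g)
      = -(f g) := by
  have h1 : ∀ i : Fin (m+2),
      (∑ j : Fin (m+2), ((-1:k)^((i:ℕ)+(j:ℕ)+1)) •
        f (j.contractNth (fun x1 x2 => x1*x2) (Fin.insertNth (α := fun _ => G) i t g)))
      = ((-1:k)^((i:ℕ)+(i:ℕ)+1)) •
          f (i.contractNth (fun x1 x2 => x1*x2) (Fin.insertNth (α := fun _ => G) i t g))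
        + ∑ b : Fin (m+1), ((-1:k)^((i:ℕ)+((i.succAbove b : Fin (m+2)):ℕ)+1)) •
            f ((i.succAbove b).contractNth (fun x1 x2 => x1*x2)
                (Fin.insertNth (α := fun _ => G) i t g)) := fun i =>
    Fin.sum_univ_succAbove _ i
  rw [Finset.sum_congr rfl fun i _ => h1 i, Finset.sum_add_distrib, Finset.sum_comm,
    hdiag A t m f g, Finset.sum_congr rfl fun b _ => hoff A t m f g b]
  have h2 : ∀ j : Fin (m+1), ((-1:k)^((j:ℕ)+1)) •
        HH A t m f (j.contractNth (fun x1 x2 => x1*x2) g)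
      = -(∑ a : Fin (m+1), ((-1:k)^((a:ℕ)+(j:ℕ))) •
          f (Fin.insertNth (α := fun _ => G) a t (j.contractNth (fun x1 x2 => x1*x2) g))) := by
    intro j
    simp only [HH]
    rw [Finset.smul_sum, ← Finset.sum_neg_distrib]
    refine Finset.sum_congr rfl fun a _ => ?_
    rw [smul_smul, ← pow_add]
    have h5 : (j:ℕ)+1+(a:ℕ) = ((a:ℕ)+(j:ℕ))+1 := by omega
    rw [h5]
    exact smul_neg_one_pow_succ _ _
  simp only [h2]
  rw [Finset.sum_add_distrib]
  have hupd : ∀ aa : Fin (m+1), Function.update g aa (t * g aa)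
      = Function.update g aa (g aa * t) := fun aa => by rw [htc]
  simp only [hupd, Finset.sum_neg_distrib]
  abel

lemma keySucc (A : Rep k G) (t : G) (c : k) (htc : ∀ x : G, t * x = x * t)
    (hρ : ∀ x : A, A.ρ t x = c • x) (m : ℕ) (f : (Fin (m+1) → G) → A)
    (g : Fin (m+1) → G) :
    (∑ i : Fin (m+2), ((-1:k)^(i:ℕ)) •
        (inhomogeneousCochains.d A (m+1)).hom f (Fin.insertNth (α := fun _ => G) i t g))
      + (inhomogeneousCochains.d A m).hom (HH A t m f) g = (c - 1) • f g := by
  have e1 : ∀ i : Fin (m+2), ((-1:k)^(i:ℕ)) •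
        (inhomogeneousCochains.d A (m+1)).hom f (Fin.insertNth (α := fun _ => G) i t g)
      = ((-1:k)^(i:ℕ)) • A.ρ (Fin.insertNth (α := fun _ => G) i t g 0)
          (f (fun l => Fin.insertNth (α := fun _ => G) i t g l.succ))
        + ∑ j : Fin (m+2), ((-1:k)^((i:ℕ)+(j:ℕ)+1)) •
            f (j.contractNth (fun x1 x2 => x1*x2)
                (Fin.insertNth (α := fun _ => G) i t g)) := by
    intro i
    rw [inhomogeneousCochains.d_hom_apply, smul_add, Finset.smul_sum]
    congr 1
    refine Finset.sum_congr rfl fun j _ => ?_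
    rw [smul_smul, ← pow_add]
    have hexp : (i:ℕ) + ((j:ℕ)+1) = (i:ℕ)+(j:ℕ)+1 := by omega
    rw [hexp]
  rw [Finset.sum_congr rfl fun i _ => e1 i, Finset.sum_add_distrib,
    inhomogeneousCochains.d_hom_apply, add_add_add_comm,
    hS1 A t c hρ m f g, hS2 A t htc m f g, sub_smul, one_smul]
  abel

lemma exactAt (A : Rep k G) (t : G) (c : k) (htc : ∀ x : G, t * x = x * t)
    (hρ : ∀ x : A, A.ρ t x = c • x) (hc : IsUnit (c - 1)) (n : ℕ) :
    (inhomogeneousCochains A).ExactAt n := by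
  obtain ⟨u, hu⟩ := hc
  cases n with
  | zero =>
    rw [(inhomogeneousCochains A).exactAt_iff' 0 0 1 (by simp) (by simp)]
    rw [CategoryTheory.ShortComplex.moduleCat_exact_iff]
    intro f hf
    refine ⟨0, ?_⟩
    have hf' : (inhomogeneousCochains.d A 0).hom f = 0 := by
      have hf2 : (inhomogeneousCochains A).d 0 1 f = 0 := hf
      rw [groupCohomology.inhomogeneousCochains.d_def] at hf2
      exact hf2
    have h0 : (c - 1) • f (fun x => x.elim0) = 0 := by
      rw [← key0 A t c hρ f, hf']
      rfl
    have hfz : f = 0 := by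
      funext x
      have hx : x = (fun y : Fin 0 => y.elim0) := funext fun y => y.elim0
      rw [hx]
      have := congrArg (fun z => (↑u⁻¹ : k) • z) h0
      have h' : f (fun y => y.elim0) = 0 := by simpa [smul_smul, ← hu] using this
      exact h'
    rw [hfz]
    simp
  | succ m =>
    rw [(inhomogeneousCochains A).exactAt_iff' m (m+1) (m+2) (by simp) (by simp)]
    rw [CategoryTheory.ShortComplex.moduleCat_exact_iff]
    intro f hf
    refine ⟨(↑u⁻¹ : k) • HH A t m f, ?_⟩
    have hf' : (inhomogeneousCochains.d A (m+1)).hom f = 0 := by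
      have hf2 : (inhomogeneousCochains A).d (m+1) (m+2) f = 0 := hf
      rw [groupCohomology.inhomogeneousCochains.d_def] at hf2
      exact hf2
    have hkey : ∀ g : Fin (m+1) → G,
        (inhomogeneousCochains.d A m).hom (HH A t m f) g = (c - 1) • f g := by
      intro g
      have := keySucc A t c htc hρ m f g
      simp only [show ∀ y, (inhomogeneousCochains.d A (m+1)).hom f y = 0 from
        fun y => by rw [hf']; rfl] at this
      simpa using this
    show (inhomogeneousCochains A).d m (m+1) ((↑u⁻¹ : k) • HH A t m f) = f
    rw [groupCohomology.inhomogeneousCochains.d_def, map_smul]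
    funext g
    show (↑u⁻¹ : k) • (inhomogeneousCochains.d A m).hom (HH A t m f) g = f g
    rw [hkey g, smul_smul, ← hu]
    simp

lemma main_subsingleton (A : Rep k G) (t : G) (c : k) (htc : ∀ x : G, t * x = x * t)
    (hρ : ∀ x : A, A.ρ t x = c • x) (hc : IsUnit (c - 1)) (n : ℕ) :
    Subsingleton (groupCohomology A n) := by
  have hz := ((inhomogeneousCochains A).exactAt_iff_isZero_homology n).mp
    (exactAt A t c htc hρ hc n)
  have h0 : (𝟙 (groupCohomology A n) : groupCohomology A n ⟶ groupCohomology A n) = 0 :=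
    hz.eq_of_src _ _
  constructor
  intro a b
  have hfun : ∀ x : groupCohomology A n, x = 0 := by
    intro x
    calc x = (𝟙 (groupCohomology A n) : groupCohomology A n ⟶ groupCohomology A n) x := rfl
      _ = (0 : groupCohomology A n ⟶ groupCohomology A n) x := by rw [h0]
      _ = 0 := rfl
  rw [hfun a, hfun b]

end

end GC2Aux

/-- The one-dimensional complex representation `ℂ(z₁, z₂)` of the group `ℤ × ℤ`
(written multiplicatively) in which `(m, n)` acts by multiplication by `z₁^m * z₂^n`. -/
noncomputable def charRepZ2 (z₁ z₂ : ℂ) (h₁ : z₁ ≠ 0) (h₂ : z₂ ≠ 0) :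
    Representation ℂ (Multiplicative (ℤ × ℤ)) ℂ where
  toFun g := (z₁ ^ (Multiplicative.toAdd g).1 * z₂ ^ (Multiplicative.toAdd g).2) • LinearMap.id
  map_one' := by ext; simp
  map_mul' g h := by
    ext
    simp [zpow_add₀ h₁, zpow_add₀ h₂, mul_smul]
    ring

/-- Corollary 2.3 (cohomological content): if `(z₁, z₂) ≠ (1, 1)`, then the group
cohomology `H^n(ℤ × ℤ; ℂ(z₁, z₂))` vanishes for every `n`. -/
theorem groupCohomology_int2_char_vanishes (z₁ z₂ : ℂ) (h₁ : z₁ ≠ 0) (h₂ : z₂ ≠ 0)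
    (hne : (z₁, z₂) ≠ (1, 1)) (n : ℕ) :
    Subsingleton (groupCohomology (Rep.of (charRepZ2 z₁ z₂ h₁ h₂)) n) := by
  have hz : z₁ ≠ 1 ∨ z₂ ≠ 1 := by
    by_contra h
    push_neg at h
    exact hne (by rw [h.1, h.2])
  rcases hz with hz | hz
  · exact GC2Aux.main_subsingleton (Rep.of (charRepZ2 z₁ z₂ h₁ h₂))
      (Multiplicative.ofAdd ((1 : ℤ), (0 : ℤ))) z₁
      (fun x => mul_comm _ _)
      (fun x => by
        show (z₁ ^ (1 : ℤ) * z₂ ^ (0 : ℤ)) • x = z₁ • x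
        norm_num)
      (isUnit_iff_ne_zero.mpr (sub_ne_zero.mpr hz)) n
  · exact GC2Aux.main_subsingleton (Rep.of (charRepZ2 z₁ z₂ h₁ h₂))
      (Multiplicative.ofAdd ((0 : ℤ), (1 : ℤ))) z₂
      (fun x => mul_comm _ _)
      (fun x => by
        show (z₁ ^ (0 : ℤ) * z₂ ^ (1 : ℤ)) • x = z₂ • x
        norm_num)
      (isUnit_iff_ne_zero.mpr (sub_ne_zero.mpr hz)) n
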